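/- arXiv:1707.02751 — 3 statements merged into one kernel-verified Lean document; each statement's English description precedes it below -/
import Mathlib

section
/- Let D₁, D₂, D₁', D₂' be open discs in ℂ, let U be an open neighborhood of closure(D₁) × closure(D₂) in ℂ², let V ⊆ ℂ^d be an open neighborhood of 0, and let (t,z) ↦ f_t(z) = (f_{t,1}(z), f_{t,2}(z)) be a holomorphic map from V × U to ℂ². If f₀ is analytic hyperbolic from D₁ × D₂ to D₁' × D₂', then there is an open neighborhood W of 0 with W ⊆ V such that for every t ∈ W the map f_t is analytic hyperbolic from D₁ × D₂ to D₁' × D₂'. -/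
open Set Metric Filter Function Topology


lemma aux_mem_ball_ne (x : ℂ) {τ : ℝ} (hτ : 0 < τ) :
    x + ((τ/2 : ℝ) : ℂ) ∈ ball x τ ∧ x + ((τ/2 : ℝ) : ℂ) ≠ x := by
  constructor
  · have hd : dist (x + ((τ/2 : ℝ) : ℂ)) x = τ/2 := by
      rw [dist_eq_norm, add_sub_cancel_left, Complex.norm_real, Real.norm_eq_abs, abs_of_pos (half_pos hτ)]
    rw [mem_ball, hd]; linarith
  · intro h
    have h2 : ((τ/2 : ℝ) : ℂ) = 0 := by
      have := add_eq_left.mp h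
      exact this
    have := Complex.ofReal_eq_zero.mp h2
    linarith

lemma no_const {g : ℂ → ℂ} {s : Set ℂ} (hinj : Set.InjOn g s) {x : ℂ} {τ : ℝ} (hτ : 0 < τ)
    (hsub : ∀ z ∈ ball x τ, z ∈ s) (hx : x ∈ s)
    (hconst : ∀ z ∈ ball x τ, g z = g x) : False := by
  obtain ⟨hmem, hne⟩ := aux_mem_ball_ne x hτ
  exact hne (hinj (hsub _ hmem) hx (hconst _ hmem))



lemma unif_close {X : Type*} [TopologicalSpace X] {F : X × ℂ → ℂ} {O : Set (X × ℂ)}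
    (hO : IsOpen O) (hF : ContinuousOn F O) {x₀ : X} {K : Set ℂ} (hK : IsCompact K)
    (hsub : ∀ y ∈ K, (x₀, y) ∈ O) {η : ℝ} (hη : 0 < η) :
    ∃ N : Set X, IsOpen N ∧ x₀ ∈ N ∧ ∀ x ∈ N, ∀ y ∈ K, dist (F (x, y)) (F (x₀, y)) < η := by
  set O' : Set (X × ℂ) := O ∩ {p | (x₀, p.2) ∈ O} with hO'
  have hO'o : IsOpen O' := hO.inter (hO.preimage (continuous_const.prodMk continuous_snd))
  have hGc : ContinuousOn (fun p : X × ℂ => dist (F p) (F (x₀, p.2))) O' :=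
    continuous_dist.comp_continuousOn ((hF.mono inter_subset_left).prodMk
      (hF.comp ((continuous_const.prodMk continuous_snd).continuousOn) (fun p hp => hp.2)))
  set S := O' ∩ (fun p : X × ℂ => dist (F p) (F (x₀, p.2))) ⁻¹' (Iio η) with hS
  have hSo : IsOpen S := hGc.isOpen_inter_preimage hO'o isOpen_Iio
  have hsub2 : ({x₀} : Set X) ×ˢ K ⊆ S := by
    rintro ⟨x, y⟩ ⟨hx, hy⟩
    rcases hx with rfl
    exact ⟨⟨hsub y hy, hsub y hy⟩, by simpa using hη⟩
  obtain ⟨u, v, huo, hvo, hxu, hKv, huv⟩ :=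
    generalized_tube_lemma isCompact_singleton hK hSo hsub2
  exact ⟨u, huo, hxu rfl, fun x hx y hy => (huv ⟨hx, hKv hy⟩).2⟩


/-- An injective holomorphic function has nonvanishing derivative. -/
theorem deriv_ne_zero_of_injOn {g : ℂ → ℂ} {s : Set ℂ} (hs : IsOpen s)
    (hd : DifferentiableOn ℂ g s) (hinj : Set.InjOn g s) {z₀ : ℂ} (hz₀ : z₀ ∈ s) :
    deriv g z₀ ≠ 0 := by
  have han : AnalyticOnNhd ℂ g s := hd.analyticOnNhd hs
  -- no local constancy
  have hnc : ∀ x ∈ s, ¬ (∀ᶠ z in 𝓝 x, g z = g x) := by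
    intro x hx hev
    obtain ⟨τ, hτ, hball⟩ := Metric.mem_nhds_iff.1 (Filter.inter_mem (hs.mem_nhds hx) hev)
    exact no_const hinj hτ (fun z hz => (hball hz).1) hx (fun z hz => (hball hz).2)
  have hopen : ∀ x ∈ s, 𝓝 (g x) ≤ Filter.map g (𝓝 x) := fun x hx =>
    ((han x hx).eventually_constant_or_nhds_le_map_nhds).resolve_left (hnc x hx)
  -- deriv nonvanishing on punctured neighborhood
  have hda : AnalyticAt ℂ (deriv g) z₀ := (han.deriv_of_isOpen hs) z₀ hz₀
  have hne : ∀ᶠ z in 𝓝[≠] z₀, deriv g z ≠ 0 := by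
    rcases hda.eventually_eq_zero_or_eventually_ne_zero with h | h
    · exfalso
      obtain ⟨τ, hτ, hball⟩ := Metric.mem_nhds_iff.1 (Filter.inter_mem (hs.mem_nhds hz₀) h)
      refine no_const hinj hτ (fun z hz => (hball hz).1) hz₀ (fun z hz => ?_)
      have mvt := Convex.norm_image_sub_le_of_norm_hasFDerivWithin_le (𝕜 := ℂ)
        (f := g) (f' := fun x => ContinuousLinearMap.smulRight (1 : ℂ →L[ℂ] ℂ) (deriv g x))
        (C := 0) (s := ball z₀ τ)
        (fun x hx => ((hd.differentiableAt (hs.mem_nhds (hball hx).1)).hasDerivAt).hasFDerivAt.hasFDerivWithinAt)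
        (fun x hx => by
          have h0 : deriv g x = 0 := (hball hx).2
          simp [h0])
        (convex_ball z₀ τ) (mem_ball_self hτ) hz
      rw [zero_mul] at mvt
      have := norm_le_zero_iff.mp mvt
      exact sub_eq_zero.mp this
    · exact h
  -- choose radius ρ
  obtain ⟨ρ₁, hρ₁, hball₁⟩ := Metric.mem_nhds_iff.1 (hs.mem_nhds hz₀)
  have hne' : ∀ᶠ z in 𝓝 z₀, z ≠ z₀ → deriv g z ≠ 0 := by
    have := eventually_nhdsWithin_iff.mp hne
    filter_upwards [this] with z hz hzne
    exact hz hzne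
  obtain ⟨ρ₂, hρ₂, hball₂⟩ := Metric.mem_nhds_iff.1 hne'
  set ρ := min ρ₁ ρ₂ with hρdef
  have hρ : 0 < ρ := lt_min hρ₁ hρ₂
  set B := ball z₀ ρ with hBdef
  have hBopen : IsOpen B := isOpen_ball
  have hz₀B : z₀ ∈ B := mem_ball_self hρ
  have hBs : B ⊆ s := fun z hz => hball₁ (ball_subset_ball (min_le_left _ _) hz)
  have hBne : ∀ z ∈ B, z ≠ z₀ → deriv g z ≠ 0 := fun z hz hzne =>
    hball₂ (ball_subset_ball (min_le_right _ _) hz) hzne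
  -- the inverse function
  set G := Function.invFunOn g B with hGdef
  have hGleft : ∀ x ∈ B, G (g x) = x := fun x hx => (hinj.mono hBs).leftInvOn_invFunOn hx
  have hGmem : ∀ y ∈ g '' B, G y ∈ B ∧ g (G y) = y := by
    rintro y ⟨x, hx, rfl⟩
    exact ⟨Function.invFunOn_mem ⟨x, hx, rfl⟩, Function.invFunOn_eq ⟨x, hx, rfl⟩⟩
  -- continuity of G at image points
  have hGcont : ∀ x₀ ∈ B, ContinuousAt G (g x₀) := by
    intro x₀ hx₀
    have hx₀s : x₀ ∈ s := hBs hx₀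
    have htend : Tendsto G (𝓝 (g x₀)) (𝓝 x₀) := by
      rw [Metric.tendsto_nhds]
      intro ε hε
      have hd₀ : dist x₀ z₀ < ρ := mem_ball.1 hx₀
      have hτ : 0 < min ε (ρ - dist x₀ z₀) := lt_min hε (by linarith)
      have hsub : ball x₀ (min ε (ρ - dist x₀ z₀)) ⊆ B := by
        intro z hz
        have h1 := mem_ball.1 hz
        have h2 : dist z x₀ < ρ - dist x₀ z₀ := lt_of_lt_of_le h1 (min_le_right _ _)
        rw [mem_ball]
        calc dist z z₀ ≤ dist z x₀ + dist x₀ z₀ := dist_triangle _ _ _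
          _ < ρ := by linarith
      have himg : g '' ball x₀ (min ε (ρ - dist x₀ z₀)) ∈ 𝓝 (g x₀) :=
        hopen x₀ hx₀s (Filter.image_mem_map (Metric.ball_mem_nhds x₀ hτ))
      filter_upwards [himg] with y hy
      obtain ⟨x, hx, rfl⟩ := hy
      rw [hGleft x (hsub hx)]
      exact lt_of_lt_of_le (mem_ball.1 hx) (min_le_left _ _)
    have : G (g x₀) = x₀ := hGleft x₀ hx₀
    unfold ContinuousAt
    rw [this]
    exact htend
  -- differentiability of G away from g z₀
  have hGdiff : ∀ x₀ ∈ B, x₀ ≠ z₀ → DifferentiableAt ℂ G (g x₀) := by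
    intro x₀ hx₀ hx₀ne
    have hx₀s : x₀ ∈ s := hBs hx₀
    have hc' : deriv g x₀ ≠ 0 := hBne x₀ hx₀ hx₀ne
    have hstrict : HasStrictDerivAt g (deriv g x₀) x₀ := by
      obtain ⟨p, hp⟩ := han x₀ hx₀s
      have h1 := hp.hasStrictDerivAt
      have h2 : deriv g x₀ = p 1 fun _ => 1 := hp.deriv
      rwa [h2]
    set e : ℂ ≃L[ℂ] ℂ := ContinuousLinearEquiv.unitsEquivAut ℂ (Units.mk0 _ hc') with hedef
    have hF : HasStrictFDerivAt g (e : ℂ →L[ℂ] ℂ) x₀ := by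
      have hcoe : (e : ℂ →L[ℂ] ℂ)
          = ContinuousLinearMap.smulRight (1 : ℂ →L[ℂ] ℂ) (deriv g x₀) := by
        ext x
        simp [hedef, ContinuousLinearEquiv.unitsEquivAut_apply, mul_comm]
      rw [hcoe]
      exact hstrict
    have hLdiff : DifferentiableAt ℂ (hF.localInverse g _ x₀) (g x₀) :=
      hF.to_localInverse.differentiableAt
    have hLG : G =ᶠ[𝓝 (g x₀)] hF.localInverse g _ x₀ := by
      have h1 := hF.eventually_right_inverse
      have h2 : Tendsto (hF.localInverse g _ x₀) (𝓝 (g x₀)) (𝓝 x₀) := by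
        have hctn := hF.localInverse_continuousAt
        unfold ContinuousAt at hctn
        rwa [hF.localInverse_apply_image] at hctn
      have h3 : ∀ᶠ y in 𝓝 (g x₀), hF.localInverse g _ x₀ y ∈ B :=
        h2 (hBopen.mem_nhds hx₀)
      filter_upwards [h1, h3] with y hy1 hy3
      have hyim : y ∈ g '' B := ⟨_, hy3, hy1⟩
      exact hinj (hBs (hGmem y hyim).1) (hBs hy3) (by rw [(hGmem y hyim).2, hy1])
    exact (hLG.differentiableAt_iff).mpr hLdiff
  -- G is analytic at g z₀
  have hGanal : AnalyticAt ℂ G (g z₀) := by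
    apply Complex.analyticAt_of_differentiable_on_punctured_nhds_of_continuousAt
    · have himg : g '' B ∈ 𝓝 (g z₀) :=
        hopen z₀ hz₀ (Filter.image_mem_map (hBopen.mem_nhds hz₀B))
      rw [eventually_nhdsWithin_iff]
      filter_upwards [himg] with y hy hyne
      obtain ⟨x, hx, rfl⟩ := hy
      have hxne : x ≠ z₀ := by
        intro h
        exact hyne (by rw [h]; rfl)
      exact hGdiff x hx hxne
    · exact hGcont z₀ hz₀B
  -- conclude
  intro hc0
  have hgd : HasDerivAt g 0 z₀ := by
    have := (hd.differentiableAt (hs.mem_nhds hz₀)).hasDerivAt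
    rwa [hc0] at this
  have hGd : HasDerivAt G (deriv G (g z₀)) (g z₀) := hGanal.differentiableAt.hasDerivAt
  have hcomp : HasDerivAt (G ∘ g) (deriv G (g z₀) * 0) z₀ := hGd.comp z₀ hgd
  have hid : HasDerivAt (G ∘ g) 1 z₀ := by
    have hev : (G ∘ g) =ᶠ[𝓝 z₀] id := by
      filter_upwards [hBopen.mem_nhds hz₀B] with x hx
      exact hGleft x hx
    exact (hasDerivAt_id' z₀).congr_of_eventuallyEq hev
  have hun := hcomp.unique hid
  rw [mul_zero] at hun
  exact zero_ne_one hun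



/-- A map `f = (f₁,f₂)` is analytic (real) hyperbolic from `D₁ × D₂` to `D₁' × D₂'`
if it is holomorphic on an open neighborhood of `closure D₁ × closure D₂`,
`f₁(closure D₁ × closure D₂) ⊆ D₁'`, and there are open sets `U₁ ⊇ closure D₁`,
`U₂ ⊇ closure D₂'` such that for all `w₁ ∈ U₁`, `z₂ ∈ U₂` there is a unique
`w₂ ∈ D₂` with `f₂(w₁,w₂) = z₂`. -/
def AnalyticHyperbolic (f : ℂ × ℂ → ℂ × ℂ) (D1 D2 D1' D2' : Set ℂ) : Prop :=
  (∃ Ω : Set (ℂ × ℂ), IsOpen Ω ∧ closure D1 ×ˢ closure D2 ⊆ Ω ∧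
    DifferentiableOn ℂ f Ω) ∧
  (∀ p ∈ closure D1 ×ˢ closure D2, (f p).1 ∈ D1') ∧
  (∃ U1 U2 : Set ℂ, IsOpen U1 ∧ IsOpen U2 ∧ closure D1 ⊆ U1 ∧ closure D2' ⊆ U2 ∧
    ∀ w1 ∈ U1, ∀ z2 ∈ U2, ∃! w2, w2 ∈ D2 ∧ (f (w1, w2)).2 = z2)

/-- Stability of analytic hyperbolicity under holomorphic perturbation.
If `(t,z) ↦ f_t(z)` is holomorphic on `V × U` with `U ⊇ closure D₁ × closure D₂`,
`V ∋ 0` open in `ℂ^d`, and `f₀` is analytic hyperbolic from `D₁ × D₂` to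
`D₁' × D₂'`, then so is `f_t` for all `t` in some open neighborhood `W ⊆ V` of `0`. -/
theorem stmt_11 (d : ℕ)
    (a1 a2 a1' a2' : ℂ) (r1 r2 r1' r2' : ℝ)
    (hr1 : 0 < r1) (hr2 : 0 < r2) (hr1' : 0 < r1') (hr2' : 0 < r2')
    (U : Set (ℂ × ℂ)) (hU : IsOpen U)
    (hU_nbhd : closure (Metric.ball a1 r1) ×ˢ closure (Metric.ball a2 r2) ⊆ U)
    (V : Set (Fin d → ℂ)) (hV : IsOpen V) (h0V : 0 ∈ V)
    (f : (Fin d → ℂ) → ℂ × ℂ → ℂ × ℂ)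
    (hf : DifferentiableOn ℂ (fun p : (Fin d → ℂ) × (ℂ × ℂ) => f p.1 p.2) (V ×ˢ U))
    (hf0 : AnalyticHyperbolic (f 0) (Metric.ball a1 r1) (Metric.ball a2 r2)
      (Metric.ball a1' r1') (Metric.ball a2' r2')) :
    ∃ W : Set (Fin d → ℂ), IsOpen W ∧ 0 ∈ W ∧ W ⊆ V ∧
      ∀ t ∈ W, AnalyticHyperbolic (f t) (Metric.ball a1 r1) (Metric.ball a2 r2)
        (Metric.ball a1' r1') (Metric.ball a2' r2') := by
  classical
  obtain ⟨-, hf0map, U1, U2, hU1o, hU2o, hU1s, hU2s, huniq⟩ := hf0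
  have hc1 : closure (ball a1 r1) = closedBall a1 r1 := closure_ball a1 hr1.ne'
  have hc2 : closure (ball a2 r2) = closedBall a2 r2 := closure_ball a2 hr2.ne'
  have hc2' : closure (ball a2' r2') = closedBall a2' r2' := closure_ball a2' hr2'.ne'
  rw [hc1, hc2] at hU_nbhd
  rw [hc1] at hU1s
  rw [hc2'] at hU2s
  have hfc : ContinuousOn (fun p : (Fin d → ℂ) × (ℂ × ℂ) => f p.1 p.2) (V ×ˢ U) :=
    hf.continuousOn
  -- tube for U
  obtain ⟨A1p, A2, hA1po, hA2o, hA1ps, hA2s, hA12p⟩ :=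
    generalized_tube_lemma (isCompact_closedBall a1 r1) (isCompact_closedBall a2 r2) hU hU_nbhd
  set A1 := A1p ∩ U1 with hA1def
  have hA1o : IsOpen A1 := hA1po.inter hU1o
  have hA1s : closedBall a1 r1 ⊆ A1 := fun z hz => ⟨hA1ps hz, hU1s hz⟩
  have hA12 : A1 ×ˢ A2 ⊆ U := fun p hp => hA12p ⟨hp.1.1, hp.2⟩
  -- enlarged radii
  obtain ⟨δR, hδR, hδRs⟩ :=
    (isCompact_closedBall a2 r2).exists_cthickening_subset_open hA2o hA2s
  set R := δR + r2 with hRdef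
  have hRgt : r2 < R := lt_add_of_pos_left _ hδR
  have hRsub : closedBall a2 R ⊆ A2 := fun z hz => hδRs (by
    rw [cthickening_closedBall hδR.le hr2.le]; exact hz)
  obtain ⟨δ1, hδ1, hδ1s⟩ :=
    (isCompact_closedBall a1 r1).exists_cthickening_subset_open hA1o hA1s
  set ρ1 := δ1 + r1 with hρ1def
  have hρ1gt : r1 < ρ1 := lt_add_of_pos_left _ hδ1
  have hρ1sub : closedBall a1 ρ1 ⊆ A1 := fun z hz => hδ1s (by
    rw [cthickening_closedBall hδ1.le hr1.le]; exact hz)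
  obtain ⟨δ2, hδ2, hδ2s⟩ :=
    (isCompact_closedBall a2' r2').exists_cthickening_subset_open hU2o hU2s
  set ρ2 := δ2 + r2' with hρ2def
  have hρ2gt : r2' < ρ2 := lt_add_of_pos_left _ hδ2
  have hρ2sub : closedBall a2' ρ2 ⊆ U2 := fun z hz => hδ2s (by
    rw [cthickening_closedBall hδ2.le hr2'.le]; exact hz)
  -- slice differentiability
  have hg_diff : ∀ t ∈ V, ∀ w₁ ∈ A1,
      DifferentiableOn ℂ (fun w : ℂ => (f t (w₁, w)).2) (ball a2 R) := by
    intro t ht w₁ hw₁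
    have hmain : DifferentiableOn ℂ (fun w : ℂ => f t (w₁, w)) (ball a2 R) := by
      have hin : DifferentiableOn ℂ
          (fun w : ℂ => ((t, (w₁, w)) : (Fin d → ℂ) × (ℂ × ℂ))) (ball a2 R) :=
        ((differentiable_const _).prodMk
          ((differentiable_const _).prodMk differentiable_id)).differentiableOn
      exact hf.comp hin
        (fun w hw => ⟨ht, hA12 ⟨hw₁, hRsub (ball_subset_closedBall hw)⟩⟩)
    exact differentiable_snd.comp_differentiableOn hmain
  -- joint continuity
  have hFbigc : ContinuousOn (fun q : ((Fin d → ℂ) × ℂ) × ℂ => (f q.1.1 (q.1.2, q.2)).2)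
      ((V ×ˢ A1) ×ˢ ball a2 R) := by
    have hr : Continuous (fun q : ((Fin d → ℂ) × ℂ) × ℂ =>
        ((q.1.1, (q.1.2, q.2)) : (Fin d → ℂ) × (ℂ × ℂ))) :=
      (continuous_fst.fst).prodMk ((continuous_fst.snd).prodMk continuous_snd)
    exact continuous_snd.comp_continuousOn (hfc.comp hr.continuousOn
      (fun q hq => ⟨hq.1.1, hA12 ⟨hq.1.2, hRsub (ball_subset_closedBall hq.2)⟩⟩))
  -- no boundary solutions for f 0
  have hKL1 : ∀ w₁ ∈ A1, ∀ w ∈ closedBall a2 r2, w ∉ ball a2 r2 →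
      (f 0 (w₁, w)).2 ∉ U2 := by
    intro w₁ hw₁ w hw hwnot hmem
    set g := fun w : ℂ => (f 0 (w₁, w)).2 with hgdef
    have hgd : DifferentiableOn ℂ g (ball a2 R) := hg_diff 0 h0V w₁ hw₁
    have hgan : AnalyticOnNhd ℂ g (ball a2 R) := hgd.analyticOnNhd isOpen_ball
    obtain ⟨w₂', ⟨hw₂'mem, hw₂'eq⟩, hw₂'uniq⟩ := huniq w₁ hw₁.2 (g w) hmem
    have hw₂'eq' : g w₂' = g w := hw₂'eq
    have hw₂'R : w₂' ∈ ball a2 R := ball_subset_ball hRgt.le hw₂'mem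
    rcases (hgan w₂' hw₂'R).eventually_constant_or_nhds_le_map_nhds with hconst | hop
    · have heq : EqOn g (fun _ => g w₂') (ball a2 R) :=
        hgan.eqOn_of_preconnected_of_eventuallyEq analyticOnNhd_const
          (convex_ball a2 R).isPreconnected hw₂'R hconst
      obtain ⟨hmem2, hne2⟩ := aux_mem_ball_ne a2 hr2
      have h1 : a2 = w₂' := hw₂'uniq a2 ⟨mem_ball_self hr2,
        (heq (ball_subset_ball hRgt.le (mem_ball_self hr2))).trans hw₂'eq'⟩
      have h2 : a2 + ((r2/2 : ℝ) : ℂ) = w₂' := hw₂'uniq _ ⟨hmem2,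
        (heq (ball_subset_ball hRgt.le hmem2)).trans hw₂'eq'⟩
      exact hne2 (h2.trans h1.symm)
    · have hdist : 0 < dist w₂' w := dist_pos.2 (fun h => hwnot (h ▸ hw₂'mem))
      have hN : ball a2 r2 ∩ ball w₂' (dist w₂' w / 2) ∈ 𝓝 w₂' :=
        Filter.inter_mem (isOpen_ball.mem_nhds hw₂'mem)
          (Metric.ball_mem_nhds _ (by positivity))
      have himg : g '' (ball a2 r2 ∩ ball w₂' (dist w₂' w / 2)) ∈ 𝓝 (g w₂') :=
        hop (Filter.image_mem_map hN)
      have hU2n : U2 ∈ 𝓝 (g w₂') := by rw [hw₂'eq']; exact hU2o.mem_nhds hmem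
      obtain ⟨ε, hε, hballε⟩ := Metric.mem_nhds_iff.1 (Filter.inter_mem himg hU2n)
      have hgc : ContinuousAt g w := (hgd.differentiableAt (isOpen_ball.mem_nhds
        (lt_of_le_of_lt (mem_closedBall.1 hw) hRgt))).continuousAt
      obtain ⟨δ, hδ, hδimp⟩ := Metric.continuousAt_iff.1 hgc ε hε
      have hwc : w ∈ closure (ball a2 r2) := by rw [hc2]; exact hw
      obtain ⟨u, hu, hud⟩ := Metric.mem_closure_iff.1 hwc
        (min δ (dist w₂' w / 2)) (lt_min hδ (by positivity))
      have hud1 : dist u w < δ := by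
        rw [dist_comm]; exact lt_of_lt_of_le hud (min_le_left _ _)
      have hud2 : dist u w < dist w₂' w / 2 := by
        rw [dist_comm]; exact lt_of_lt_of_le hud (min_le_right _ _)
      have hgu : g u ∈ ball (g w₂') ε := by
        rw [mem_ball, hw₂'eq']
        exact hδimp hud1
      obtain ⟨⟨v, hv, hveq⟩, hguU2⟩ := hballε hgu
      obtain ⟨sol, hsol, hsoluniq⟩ := huniq w₁ hw₁.2 (g u) hguU2
      have h1 : u = sol := hsoluniq u ⟨hu, rfl⟩
      have h2 : v = sol := hsoluniq v ⟨hv.1, hveq⟩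
      have hufar : dist w₂' w / 2 ≤ dist u w₂' := by
        have h3 := dist_triangle w₂' u w
        have h4 : dist u w₂' = dist w₂' u := dist_comm _ _
        linarith
      have hvnear : dist v w₂' < dist w₂' w / 2 := mem_ball.1 hv.2
      have : u ≠ v := by
        intro h
        rw [h] at hufar
        linarith
      exact this (h1.trans h2.symm)
  -- component 1 neighborhood
  have hS1o : IsOpen ((V ×ˢ U) ∩
      (fun q : (Fin d → ℂ) × (ℂ × ℂ) => (f q.1 q.2).1) ⁻¹' (ball a1' r1')) :=
    ContinuousOn.isOpen_inter_preimage (continuous_fst.comp_continuousOn hfc)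
      (hV.prod hU) isOpen_ball
  have hsub1 : ({(0 : Fin d → ℂ)} : Set (Fin d → ℂ)) ×ˢ
      (closedBall a1 r1 ×ˢ closedBall a2 r2) ⊆ (V ×ˢ U) ∩
      (fun q : (Fin d → ℂ) × (ℂ × ℂ) => (f q.1 q.2).1) ⁻¹' (ball a1' r1') := by
    rintro ⟨t, p⟩ ⟨ht, hp⟩
    rcases ht with rfl
    refine ⟨⟨h0V, hU_nbhd hp⟩, ?_⟩
    have hp' : p ∈ closure (ball a1 r1) ×ˢ closure (ball a2 r2) := by
      rw [hc1, hc2]; exact hp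
    exact hf0map p hp'
  obtain ⟨W1, Q1, hW1o, _, hW1m, hQ1s, hW1prod⟩ :=
    generalized_tube_lemma isCompact_singleton
      ((isCompact_closedBall a1 r1).prod (isCompact_closedBall a2 r2)) hS1o hsub1
  -- the per-point statement
  set PP := closedBall a1 ρ1 ×ˢ closedBall a2' ρ2 with hPP
  have hstar : ∀ p : ℂ × ℂ, p ∈ PP →
      ∃ (N : Set ((Fin d → ℂ) × ℂ)) (ζ : ℝ), IsOpen N ∧ ((0 : Fin d → ℂ), p.1) ∈ N ∧ 0 < ζ ∧
        ∀ t w₁, (t, w₁) ∈ N → ∀ z₂, dist z₂ p.2 < ζ →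
          ∃! w₂, w₂ ∈ ball a2 r2 ∧ (f t (w₁, w₂)).2 = z₂ := by
    rintro ⟨w10, z20⟩ ⟨hw10, hz20⟩
    simp only at hw10 hz20 ⊢
    have hw10A : w10 ∈ A1 := hρ1sub hw10
    have hz20U2 : z20 ∈ U2 := hρ2sub hz20
    set g0 := fun w : ℂ => (f 0 (w10, w)).2 with hg0def
    have hg0d : DifferentiableOn ℂ g0 (ball a2 R) := hg_diff 0 h0V w10 hw10A
    obtain ⟨w2', hw2'both, hw2'uniq⟩ := huniq w10 hw10A.2 z20 hz20U2
    obtain ⟨hw2'mem, hw2'eqraw⟩ := hw2'both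
    have hw2'eq : g0 w2' = z20 := hw2'eqraw
    have hw2'R : w2' ∈ ball a2 R := ball_subset_ball hRgt.le hw2'mem
    -- derivative nonzero
    set s0 := ball a2 r2 ∩ (ball a2 R ∩ g0 ⁻¹' U2) with hs0def
    have hs0sub : s0 ⊆ ball a2 R := fun z hz => hz.2.1
    have hs0o : IsOpen s0 := isOpen_ball.inter
      (ContinuousOn.isOpen_inter_preimage hg0d.continuousOn isOpen_ball hU2o)
    have hw2's0 : w2' ∈ s0 := ⟨hw2'mem, hw2'R, by
      rw [mem_preimage, hw2'eq]; exact hz20U2⟩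
    have hinj0 : Set.InjOn g0 s0 := by
      intro u hu v hv huv
      obtain ⟨sol, hsol, hsoluniq⟩ := huniq w10 hw10A.2 (g0 u) hu.2.2
      rw [hsoluniq u ⟨hu.1, rfl⟩, hsoluniq v ⟨hv.1, huv.symm⟩]
    have hcne : deriv g0 w2' ≠ 0 :=
      deriv_ne_zero_of_injOn hs0o (hg0d.mono hs0sub) hinj0 hw2's0
    set c := deriv g0 w2' with hcdef
    have hcpos : 0 < ‖c‖ := norm_pos_iff.mpr hcne
    -- continuity of deriv g0
    have hdc : ContinuousAt (deriv g0) w2' :=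
      (((hg0d.analyticOnNhd isOpen_ball).deriv_of_isOpen isOpen_ball) w2' hw2'R).continuousAt
    -- choose ε₀
    obtain ⟨ε0, hε0, hsub2ε, hderivc⟩ : ∃ ε0 > 0, closedBall w2' (2*ε0) ⊆ s0 ∧
        ∀ w ∈ closedBall w2' (2*ε0), dist (deriv g0 w) c < ‖c‖/4 := by
      obtain ⟨ε1, hε1, h1⟩ := Metric.mem_nhds_iff.1 (hs0o.mem_nhds hw2's0)
      obtain ⟨ε2, hε2, h2⟩ := Metric.continuousAt_iff.1 hdc (‖c‖/4) (by positivity)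
      refine ⟨min ε1 ε2 / 4, by positivity, ?_, ?_⟩
      · intro z hz
        apply h1
        rw [mem_ball]
        calc dist z w2' ≤ 2 * (min ε1 ε2 / 4) := mem_closedBall.1 hz
          _ < min ε1 ε2 := by have := lt_min hε1 hε2; linarith
          _ ≤ ε1 := min_le_left _ _
      · intro w hw
        apply h2
        calc dist w w2' ≤ 2 * (min ε1 ε2 / 4) := mem_closedBall.1 hw
          _ < min ε1 ε2 := by have := lt_min hε1 hε2; linarith
          _ ≤ ε2 := min_le_right _ _
    have hcb2 : closedBall w2' (2*ε0) ⊆ ball a2 r2 := fun z hz => (hsub2ε hz).1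
    have hcbsub : closedBall w2' ε0 ⊆ closedBall w2' (2*ε0) :=
      closedBall_subset_closedBall (by linarith)
    have hballsub : ball w2' ε0 ⊆ closedBall w2' (2*ε0) :=
      Subset.trans ball_subset_closedBall hcbsub
    -- the compact set away from w2'
    set K' := closedBall a2 r2 \ ball w2' ε0 with hK'def
    have hK'c : IsCompact K' := (isCompact_closedBall a2 r2).diff isOpen_ball
    have hK'ne : K'.Nonempty := by
      refine ⟨w2' + ((ε0 : ℝ) : ℂ), ?_, ?_⟩
      · apply ball_subset_closedBall
        apply hcb2
        rw [mem_closedBall, dist_eq_norm, add_sub_cancel_left, Complex.norm_real,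
          Real.norm_eq_abs, abs_of_pos hε0]
        linarith
      · rw [mem_ball, dist_eq_norm, add_sub_cancel_left, Complex.norm_real,
          Real.norm_eq_abs, abs_of_pos hε0]
        simp
    have hK'pos : ∀ w ∈ K', g0 w ≠ z20 := by
      rintro w ⟨hw1, hw2⟩ heq
      by_cases hwball : w ∈ ball a2 r2
      · have : w = w2' := hw2'uniq w ⟨hwball, heq⟩
        rw [this] at hw2
        exact hw2 (mem_ball_self hε0)
      · exact hKL1 w10 hw10A w hw1 hwball (by rw [← heq] at hz20U2; exact hz20U2)
    have hK'R : K' ⊆ ball a2 R := fun z hz =>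
      lt_of_le_of_lt (mem_closedBall.1 hz.1) hRgt
    obtain ⟨wm, hwm, hwmmin⟩ := hK'c.exists_isMinOn hK'ne
      ((continuous_dist.comp_continuousOn (((hg0d.continuousOn.mono hK'R)).prodMk
        continuousOn_const)) :
        ContinuousOn (fun w => dist (g0 w) z20) K')
    set m := dist (g0 wm) z20 with hmdef
    have hm : 0 < m := dist_pos.2 (hK'pos wm hwm)
    have hmlow : ∀ w ∈ K', m ≤ dist (g0 w) z20 := fun w hw => hwmmin hw
    -- η and the neighborhood N
    set η := min (m/4) (ε0 * ‖c‖ / 8) with hηdef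
    have hηpos : 0 < η := lt_min (by positivity) (by positivity)
    have hηm : η ≤ m/4 := min_le_left _ _
    have hηc : η ≤ ε0 * ‖c‖ / 8 := min_le_right _ _
    obtain ⟨N0, hN0o, hN0m, hN0close⟩ := unif_close (X := (Fin d → ℂ) × ℂ)
      ((hV.prod hA1o).prod isOpen_ball) hFbigc (x₀ := ((0 : Fin d → ℂ), w10))
      (isCompact_closedBall a2 r2)
      (fun y hy => ⟨⟨h0V, hw10A⟩, lt_of_le_of_lt (mem_closedBall.1 hy) hRgt⟩) hηpos
    refine ⟨N0 ∩ (V ×ˢ A1), m/4, hN0o.inter (hV.prod hA1o), ⟨hN0m, h0V, hw10A⟩,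
      by positivity, ?_⟩
    rintro t w₁ ⟨htN0, htV, htA1⟩ z₂ hz₂
    set g := fun w : ℂ => (f t (w₁, w)).2 with hgdef
    have hclose : ∀ w ∈ closedBall a2 r2, dist (g w) (g0 w) < η := fun w hw =>
      hN0close (t, w₁) htN0 w hw
    have hgd : DifferentiableOn ℂ g (ball a2 R) := hg_diff t htV w₁ htA1
    -- no solutions away from w2'
    have hfar : ∀ w ∈ closedBall a2 r2, w ∉ ball w2' ε0 → m/2 ≤ dist (g w) z₂ := by
      intro w hw hwnot
      have h1 : m ≤ dist (g0 w) z20 := hmlow w ⟨hw, hwnot⟩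
      have h2 : dist (g w) (g0 w) < η := hclose w hw
      have h3 := dist_triangle4 (g0 w) (g w) z₂ z20
      have h4 : dist (g0 w) (g w) = dist (g w) (g0 w) := dist_comm _ _
      have h5 : dist z₂ z20 < m/4 := hz₂
      linarith
    -- derivative control on ball w2' ε0
    have hderg : ∀ w ∈ ball w2' ε0, ‖deriv g w - c‖ ≤ 3/8 * ‖c‖ := by
      intro w hw
      have hball_in : closedBall w ε0 ⊆ closedBall w2' (2*ε0) := by
        intro z hz
        rw [mem_closedBall]
        calc dist z w2' ≤ dist z w + dist w w2' := dist_triangle _ _ _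
          _ ≤ ε0 + ε0 := add_le_add (mem_closedBall.1 hz) (mem_ball.1 hw).le
          _ = 2*ε0 := by ring
      have hball_in2 : closedBall w ε0 ⊆ ball a2 R := fun z hz =>
        lt_of_le_of_lt (mem_closedBall.1 (ball_subset_closedBall (hcb2 (hball_in hz)))) hRgt
      have hdiffsub : DifferentiableOn ℂ (fun z => g z - g0 z) (closedBall w ε0) :=
        (hgd.sub hg0d).mono hball_in2
      have hdcc : DiffContOnCl ℂ (fun z => g z - g0 z) (ball w ε0) := by
        apply DifferentiableOn.diffContOnCl
        rwa [closure_ball w hε0.ne']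
      have hbound : ∀ z ∈ sphere w ε0, ‖g z - g0 z‖ ≤ η := by
        intro z hz
        have : z ∈ closedBall a2 r2 := ball_subset_closedBall (hcb2 (hball_in
          (sphere_subset_closedBall hz)))
        have := hclose z this
        rw [dist_eq_norm] at this
        exact this.le
      have hcauchy := Complex.norm_deriv_le_of_forall_mem_sphere_norm_le hε0 hdcc hbound
      have hderiveq : deriv (fun z => g z - g0 z) w = deriv g w - deriv g0 w := by
        apply deriv_sub
        · exact hgd.differentiableAt (isOpen_ball.mem_nhds (hball_in2 (mem_closedBall_self hε0.le)))
        · exact hg0d.differentiableAt (isOpen_ball.mem_nhds (hball_in2 (mem_closedBall_self hε0.le)))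
      rw [hderiveq] at hcauchy
      have h6 : η / ε0 ≤ ‖c‖/8 := by
        rw [div_le_iff₀ hε0]
        calc η ≤ ε0 * ‖c‖ / 8 := hηc
          _ = ‖c‖/8 * ε0 := by ring
      have h7 : dist (deriv g0 w) c < ‖c‖/4 := hderivc w (hballsub hw)
      rw [dist_eq_norm] at h7
      calc ‖deriv g w - c‖ = ‖(deriv g w - deriv g0 w) + (deriv g0 w - c)‖ := by ring_nf
        _ ≤ ‖deriv g w - deriv g0 w‖ + ‖deriv g0 w - c‖ := norm_add_le _ _
        _ ≤ η / ε0 + ‖c‖/4 := add_le_add hcauchy h7.le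
        _ ≤ ‖c‖/8 + ‖c‖/4 := by linarith
        _ = 3/8 * ‖c‖ := by ring
    -- injectivity on ball w2' ε0
    have hinjg : ∀ u ∈ ball w2' ε0, ∀ v ∈ ball w2' ε0, g u = g v → u = v := by
      intro u hu v hv huv
      by_contra hne
      have hball_in2 : ball w2' ε0 ⊆ ball a2 R := fun z hz =>
        lt_of_le_of_lt (mem_closedBall.1 (ball_subset_closedBall (hcb2 (hballsub hz)))) hRgt
      have mvt := Convex.norm_image_sub_le_of_norm_hasFDerivWithin_le (𝕜 := ℂ)
        (f := fun w => g w - c * w)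
        (f' := fun x => ContinuousLinearMap.smulRight (1 : ℂ →L[ℂ] ℂ) (deriv g x - c))
        (C := 3/8 * ‖c‖) (s := ball w2' ε0)
        (fun x hx => by
          have hdx : HasDerivAt g (deriv g x) x :=
            (hgd.differentiableAt (isOpen_ball.mem_nhds (hball_in2 hx))).hasDerivAt
          have hdd : HasDerivAt (fun w => g w - c * w) (deriv g x - c) x := by
            have := hdx.sub ((hasDerivAt_id x).const_mul c)
            rw [mul_one] at this
            exact this
          exact hdd.hasFDerivAt.hasFDerivWithinAt)
        (fun x hx => by
          have hn1 : ‖(1 : ℂ →L[ℂ] ℂ)‖ = 1 := by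
            rw [ContinuousLinearMap.one_def, ContinuousLinearMap.norm_id]
          rw [ContinuousLinearMap.norm_smulRight_apply, hn1, one_mul]
          exact hderg x hx)
        (convex_ball w2' ε0) hv hu
      have heval : (g u - c * u) - (g v - c * v) = c * (v - u) := by
        rw [huv]; ring
      rw [heval] at mvt
      have h8 : ‖c * (v - u)‖ = ‖c‖ * ‖v - u‖ := norm_mul _ _
      have h9 : ‖u - v‖ = ‖v - u‖ := norm_sub_rev _ _
      rw [h8, h9] at mvt
      have h10 : 0 < ‖v - u‖ := by
        rw [norm_pos_iff, sub_ne_zero]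
        exact fun h => hne (h.symm)
      nlinarith
    -- existence of a solution in ball w2' ε0
    have hexist : ∃ w₂ ∈ ball w2' ε0, g w₂ = z₂ := by
      by_contra hno
      push_neg at hno
      have hc_center : dist (g w2') z₂ < m/2 := by
        have h1 : dist (g w2') (g0 w2') < η :=
          hclose w2' (ball_subset_closedBall hw2'mem)
        have h2 := dist_triangle (g w2') (g0 w2') z₂
        have h3 := dist_triangle (g0 w2') z20 z₂
        have h4 : dist (g0 w2') z20 = 0 := by rw [hw2'eq, dist_self]
        have h5 : dist z20 z₂ < m/4 := by rw [dist_comm]; exact hz₂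
        linarith
      have hnz : ∀ z ∈ closedBall w2' ε0, g z - z₂ ≠ 0 := by
        intro z hz
        rw [sub_ne_zero]
        rcases eq_or_lt_of_le (mem_closedBall.1 hz) with heq | hlt
        · intro hgz
          have hzK : m/2 ≤ dist (g z) z₂ := hfar z
            (ball_subset_closedBall (hcb2 (hcbsub hz)))
            (by rw [mem_ball]; intro h; rw [heq] at h; exact absurd h (lt_irrefl _))
          rw [hgz, dist_self] at hzK
          linarith
        · exact hno z (mem_ball.2 hlt)
      set h := fun z : ℂ => (g z - z₂)⁻¹ with hhdef
      have hball_in2 : closedBall w2' ε0 ⊆ ball a2 R := fun z hz =>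
        lt_of_le_of_lt (mem_closedBall.1 (ball_subset_closedBall (hcb2 (hcbsub hz)))) hRgt
      have hhd : DifferentiableOn ℂ h (closedBall w2' ε0) :=
        DifferentiableOn.inv ((hgd.mono hball_in2).sub (differentiableOn_const z₂)) hnz
      have hdcc : DiffContOnCl ℂ h (ball w2' ε0) := by
        apply DifferentiableOn.diffContOnCl
        rwa [closure_ball w2' hε0.ne']
      have hfr : ∀ z ∈ frontier (ball w2' ε0), ‖h z‖ ≤ 2/m := by
        intro z hz
        rw [frontier_ball w2' hε0.ne'] at hz
        have hzcb : z ∈ closedBall w2' ε0 := sphere_subset_closedBall hz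
        have hznot : z ∉ ball w2' ε0 := by
          rw [mem_ball, mem_sphere.1 hz]
          exact lt_irrefl _
        have hlow : m/2 ≤ dist (g z) z₂ := hfar z
          (ball_subset_closedBall (hcb2 (hcbsub hzcb))) hznot
        rw [dist_eq_norm] at hlow
        rw [hhdef]
        simp only [norm_inv]
        rw [inv_le_comm₀ (by linarith) (by positivity)]
        calc (2/m)⁻¹ = m/2 := by rw [inv_div]
          _ ≤ ‖g z - z₂‖ := hlow
      have hmax := Complex.norm_le_of_forall_mem_frontier_norm_le isBounded_ball hdcc hfr
        (subset_closure (mem_ball_self hε0))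
      have hc0 : g w2' - z₂ ≠ 0 := hnz w2' (mem_closedBall_self hε0.le)
      have hlt : ‖g w2' - z₂‖ < m/2 := by rw [← dist_eq_norm]; exact hc_center
      have hgt : 2/m < ‖h w2'‖ := by
        rw [hhdef]
        simp only [norm_inv]
        have h2m : (2/m) = (m/2)⁻¹ := by rw [inv_div]
        rw [h2m]
        exact inv_strictAnti₀ (norm_pos_iff.mpr hc0) hlt
      linarith
    obtain ⟨w₂, hw₂mem, hw₂eq⟩ := hexist
    refine ⟨w₂, ⟨hcb2 (hballsub hw₂mem), hw₂eq⟩, ?_⟩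
    rintro v ⟨hv1, hv2⟩
    have hvin : v ∈ ball w2' ε0 := by
      by_contra hvnot
      have := hfar v (ball_subset_closedBall hv1) hvnot
      have hv2' : g v = z₂ := hv2
      rw [hv2', dist_self] at this
      linarith
    exact hinjg v hvin w₂ hw₂mem (hv2.trans hw₂eq.symm)
  -- glue
  choose Np ζp hNpo hNpm hζp hNp using hstar
  set OO : Set ((Fin d → ℂ) × ℂ × ℂ) := ⋃ (p : ℂ × ℂ) (hp : p ∈ PP),
    ((fun q : (Fin d → ℂ) × ℂ × ℂ => (q.1, q.2.1)) ⁻¹' (Np p hp) ∩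
      (fun q : (Fin d → ℂ) × ℂ × ℂ => q.2.2) ⁻¹' (ball p.2 (ζp p hp))) with hOO
  have hOOo : IsOpen OO := by
    refine isOpen_iUnion (fun p => isOpen_iUnion (fun hp => ?_))
    exact ((hNpo p hp).preimage ((continuous_fst).prodMk (continuous_snd.fst))).inter
      (isOpen_ball.preimage (continuous_snd.snd))
  have hOOs : ({(0 : Fin d → ℂ)} : Set (Fin d → ℂ)) ×ˢ PP ⊆ OO := by
    rintro ⟨t, p⟩ ⟨ht, hp⟩
    rcases ht with rfl
    exact mem_iUnion.2 ⟨p, mem_iUnion.2 ⟨hp, ⟨hNpm p hp, mem_ball_self (hζp p hp)⟩⟩⟩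
  have hPPc : IsCompact PP := (isCompact_closedBall a1 ρ1).prod (isCompact_closedBall a2' ρ2)
  obtain ⟨W2, Q2, hW2o, hQ2o, hW2m, hQ2s, hW2prod⟩ :=
    generalized_tube_lemma isCompact_singleton hPPc hOOo hOOs
  have hPP'Q2 : closedBall a1 r1 ×ˢ closedBall a2' r2' ⊆ Q2 := by
    intro p hp
    exact hQ2s ⟨closedBall_subset_closedBall hρ1gt.le hp.1,
      closedBall_subset_closedBall hρ2gt.le hp.2⟩
  obtain ⟨U1', U2', hU1'o, hU2'o, hU1's, hU2's, hU12'⟩ :=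
    generalized_tube_lemma (isCompact_closedBall a1 r1) (isCompact_closedBall a2' r2') hQ2o
      hPP'Q2
  refine ⟨W1 ∩ W2 ∩ V, (hW1o.inter hW2o).inter hV,
    ⟨⟨hW1m rfl, hW2m rfl⟩, h0V⟩, fun t ht => ht.2, ?_⟩
  rintro t ⟨⟨htW1, htW2⟩, htV⟩
  refine ⟨⟨A1 ×ˢ A2, hA1o.prod hA2o, ?_, ?_⟩, ?_, ?_⟩
  · rw [hc1, hc2]
    exact prod_mono hA1s hA2s
  · have hin : DifferentiableOn ℂ
        (fun p : ℂ × ℂ => ((t, p) : (Fin d → ℂ) × (ℂ × ℂ))) (A1 ×ˢ A2) :=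
      ((differentiable_const _).prodMk differentiable_id).differentiableOn
    exact hf.comp hin (fun p hp => ⟨htV, hA12 hp⟩)
  · intro p hp
    rw [hc1, hc2] at hp
    have hmem : (t, p) ∈ W1 ×ˢ Q1 := Set.mem_prod.mpr ⟨htW1, hQ1s hp⟩
    have := (hW1prod hmem).2
    exact Set.mem_preimage.mp this
  · refine ⟨U1', U2', hU1'o, hU2'o, by rw [hc1]; exact hU1's, by rw [hc2']; exact hU2's, ?_⟩
    intro w1 hw1 z2 hz2
    have hq : ((t, (w1, z2)) : (Fin d → ℂ) × ℂ × ℂ) ∈ OO :=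
      hW2prod ⟨htW2, hU12' ⟨hw1, hz2⟩⟩
    simp only [hOO, mem_iUnion] at hq
    obtain ⟨p, hp, hqN, hqball⟩ := hq
    exact hNp p hp t w1 hqN z2 (mem_ball.1 hqball)
end

section
/- Let ν : (0,∞) → ℝ be nonnegative and nondecreasing, and suppose there are constants C₃ ≥ 0 and C₄ ≥ 0 such that ∫₀^r ν(s)/s ds ≤ C₃ + C₄ |log r|³ for all r > 0. Then for every r ≥ 1 the function s ↦ ν(s)/s² is integrable on (r,∞), and there exist constants C₇ ≥ 0 and C₈ ≥ 0 such that for all r ≥ 1: ∫₀^r ν(s)/s ds + r ∫_r^∞ ν(s)/s² ds ≤ C₇ + C₈ (log r)³. -/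
open MeasureTheory Real Filter Set Topology

lemma aux_deriv (C₃ C₄ x : ℝ) (hx : 0 < x) :
    HasDerivAt (fun s => -((C₃ + C₄ * ((Real.log s)^3 + 6*(Real.log s)^2 + 15*Real.log s + 16)) / s))
      ((C₃ + C₄ * (1 + Real.log x)^3) / x^2) x := by
  have hlog := Real.hasDerivAt_log hx.ne'
  have hinner : HasDerivAt (fun s => (Real.log s)^3 + 6*(Real.log s)^2 + 15*Real.log s + 16)
      ((3 * (Real.log x)^2 * x⁻¹) + 6 * (2 * Real.log x * x⁻¹) + 15 * x⁻¹) x := by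
    have h3 : HasDerivAt (fun s => (Real.log s)^3) (3 * (Real.log x)^2 * x⁻¹) x := by
      simpa using hlog.fun_pow 3
    have h2 : HasDerivAt (fun s => 6*(Real.log s)^2) (6 * (2 * Real.log x * x⁻¹)) x := by
      simpa using (hlog.pow 2).const_mul 6
    have h1 : HasDerivAt (fun s => 15*Real.log s) (15 * x⁻¹) x := hlog.const_mul 15
    simpa using ((h3.add h2).add h1).add_const 16
  have hN := (hinner.const_mul C₄).const_add C₃
  have := (hN.fun_div (hasDerivAt_id' (x := x)) hx.ne').fun_neg
  refine this.congr_deriv ?_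
  field_simp
  ring

lemma aux_tendsto (C₃ C₄ : ℝ) :
    Tendsto (fun s => -((C₃ + C₄ * ((Real.log s)^3 + 6*(Real.log s)^2 + 15*Real.log s + 16)) / s))
      atTop (𝓝 0) := by
  have hp : ∀ n : ℕ, Tendsto (fun s : ℝ => (Real.log s)^n / s) atTop (𝓝 0) := by
    intro n
    simpa using Real.tendsto_pow_log_div_mul_add_atTop 1 0 n one_ne_zero
  have hc : ∀ c : ℝ, Tendsto (fun s : ℝ => c / s) atTop (𝓝 0) :=
    fun c => tendsto_const_nhds.div_atTop tendsto_id
  have h : Tendsto (fun s : ℝ => C₃ / s + C₄ * ((Real.log s)^3 / s) + 6*C₄ * ((Real.log s)^2 / s)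
      + 15*C₄ * ((Real.log s)^1 / s) + 16*C₄ / s) atTop (𝓝 0) := by
    have := ((((hc C₃).add ((hp 3).const_mul C₄)).add ((hp 2).const_mul (6*C₄))).add
        ((hp 1).const_mul (15*C₄))).add (hc (16*C₄))
    simpa using this
  have := h.neg
  rw [neg_zero] at this
  refine this.congr' ?_
  filter_upwards [eventually_gt_atTop (0:ℝ)] with s hs
  field_simp
  ring

lemma aux_pointwise (ν : ℝ → ℝ) (C₃ C₄ : ℝ)
    (hν_nonneg : ∀ s : ℝ, 0 < s → 0 ≤ ν s)
    (hν_mono : ∀ s t : ℝ, 0 < s → s ≤ t → ν s ≤ ν t)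
    (hν_int : ∀ r : ℝ, 0 < r → IntegrableOn (fun s => ν s / s) (Set.Ioc 0 r))
    (hν_bound : ∀ r : ℝ, 0 < r →
      ∫ s in Set.Ioc 0 r, ν s / s ≤ C₃ + C₄ * |Real.log r| ^ 3)
    (s : ℝ) (hs1 : 1 ≤ s) : ν s ≤ C₃ + C₄ * (1 + Real.log s)^3 := by
  have hs : (0:ℝ) < s := lt_of_lt_of_le one_pos hs1
  have he1 : (1:ℝ) < Real.exp 1 := by
    have := Real.add_one_lt_exp (x := 1) one_ne_zero; linarith
  have hes : 0 < Real.exp 1 * s := by positivity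
  have hle : s ≤ Real.exp 1 * s := by nlinarith
  have h0 : (0:ℝ) ∉ Set.uIcc s (Real.exp 1 * s) := by
    rw [Set.uIcc_of_le hle]
    intro h
    exact absurd h.1 (not_le.mpr hs)
  have hlogs : 0 ≤ Real.log s := Real.log_nonneg hs1
  have hloges : Real.log (Real.exp 1 * s) = 1 + Real.log s := by
    rw [Real.log_mul (by positivity) hs.ne', Real.log_exp]
  have key : ν s = ∫ t in Set.Ioc s (Real.exp 1 * s), ν s / t := by
    calc ν s = ν s * Real.log (Real.exp 1 * s / s) := by
          rw [mul_div_assoc, div_self hs.ne', mul_one, Real.log_exp, mul_one]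
      _ = ν s * ∫ t in s..(Real.exp 1 * s), 1 / t := by rw [integral_one_div h0]
      _ = ∫ t in s..(Real.exp 1 * s), ν s * (1 / t) := by
          rw [intervalIntegral.integral_const_mul]
      _ = ∫ t in Set.Ioc s (Real.exp 1 * s), ν s / t := by
          rw [intervalIntegral.integral_of_le hle]
          simp [div_eq_mul_inv]
  have hint2 : IntegrableOn (fun t => ν t / t) (Set.Ioc s (Real.exp 1 * s)) :=
    (hν_int _ hes).mono_set (Set.Ioc_subset_Ioc_left hs.le)
  have hint1 : IntegrableOn (fun t => ν s / t) (Set.Ioc s (Real.exp 1 * s)) := by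
    apply (ContinuousOn.integrableOn_Icc ?_).mono_set Set.Ioc_subset_Icc_self
    exact ContinuousOn.div continuousOn_const continuousOn_id
      (fun t ht => (lt_of_lt_of_le hs ht.1).ne')
  have step1 : ∫ t in Set.Ioc s (Real.exp 1 * s), ν s / t
      ≤ ∫ t in Set.Ioc s (Real.exp 1 * s), ν t / t := by
    apply setIntegral_mono_on hint1 hint2 measurableSet_Ioc
    intro t ht
    have ht0 : 0 < t := lt_trans hs ht.1
    exact (div_le_div_iff_of_pos_right ht0).mpr (hν_mono s t hs ht.1.le)
  have step2 : ∫ t in Set.Ioc s (Real.exp 1 * s), ν t / t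
      ≤ ∫ t in Set.Ioc 0 (Real.exp 1 * s), ν t / t := by
    apply setIntegral_mono_set (hν_int _ hes)
    · exact (ae_restrict_iff' measurableSet_Ioc).mpr (ae_of_all _
        (fun t ht => div_nonneg (hν_nonneg t ht.1) ht.1.le))
    · exact HasSubset.Subset.eventuallyLE (Set.Ioc_subset_Ioc_left hs.le)
  have step3 := hν_bound _ hes
  rw [hloges, abs_of_nonneg (by linarith)] at step3
  linarith [key ▸ (le_trans step1 step2)]

/-- If `ν : (0,∞) → ℝ` is nonnegative, nondecreasing, and satisfies
`∫₀^r ν(s)/s ds ≤ C₃ + C₄ |log r|³` for all `r > 0`, then for every `r ≥ 1` the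
function `s ↦ ν(s)/s²` is integrable on `(r,∞)`, and there are `C₇, C₈ ≥ 0` with
`∫₀^r ν(s)/s ds + r ∫_r^∞ ν(s)/s² ds ≤ C₇ + C₈ (log r)³` for all `r ≥ 1`. -/
theorem stmt_13 (ν : ℝ → ℝ) (C₃ C₄ : ℝ) (hC₃ : 0 ≤ C₃) (hC₄ : 0 ≤ C₄)
    (hν_nonneg : ∀ s : ℝ, 0 < s → 0 ≤ ν s)
    (hν_mono : ∀ s t : ℝ, 0 < s → s ≤ t → ν s ≤ ν t)
    (hν_int : ∀ r : ℝ, 0 < r → IntegrableOn (fun s => ν s / s) (Set.Ioc 0 r))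
    (hν_bound : ∀ r : ℝ, 0 < r →
      ∫ s in Set.Ioc 0 r, ν s / s ≤ C₃ + C₄ * |Real.log r| ^ 3) :
    (∀ r : ℝ, 1 ≤ r → IntegrableOn (fun s => ν s / s ^ 2) (Set.Ioi r)) ∧
    ∃ C₇ C₈ : ℝ, 0 ≤ C₇ ∧ 0 ≤ C₈ ∧ ∀ r : ℝ, 1 ≤ r →
      (∫ s in Set.Ioc 0 r, ν s / s) + r * ∫ s in Set.Ioi r, ν s / s ^ 2
        ≤ C₇ + C₈ * (Real.log r) ^ 3 := by
  have hpt := aux_pointwise ν C₃ C₄ hν_nonneg hν_mono hν_int hν_bound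
  set g : ℝ → ℝ := fun t => (C₃ + C₄ * (1 + Real.log t)^3) / t^2 with hg_def
  -- measurability of ν on [1, ∞)
  have hm : Measurable (fun s : ℝ => ν (max s 1)) := by
    apply Monotone.measurable
    intro a b hab
    exact hν_mono _ _ (lt_of_lt_of_le one_pos (le_max_right a 1)) (max_le_max hab le_rfl)
  -- key facts for each r ≥ 1
  have hfacts : ∀ r : ℝ, 1 ≤ r → IntegrableOn (fun s => ν s / s ^ 2) (Set.Ioi r) ∧
      r * (∫ s in Set.Ioi r, ν s / s ^ 2)
        ≤ C₃ + C₄ * ((Real.log r)^3 + 6*(Real.log r)^2 + 15*Real.log r + 16) := by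
    intro r hr
    have hr0 : (0:ℝ) < r := lt_of_lt_of_le one_pos hr
    have hFd : ∀ x ∈ Set.Ici r, HasDerivAt
        (fun s => -((C₃ + C₄ * ((Real.log s)^3 + 6*(Real.log s)^2 + 15*Real.log s + 16)) / s))
        (g x) x := fun x hx => aux_deriv C₃ C₄ x (lt_of_lt_of_le hr0 hx)
    have hgpos : ∀ x ∈ Set.Ioi r, 0 ≤ g x := by
      intro x hx
      have hx1 : (1:ℝ) ≤ x := le_trans hr (le_of_lt hx)
      have : 0 ≤ Real.log x := Real.log_nonneg hx1
      apply div_nonneg _ (by positivity)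
      exact add_nonneg hC₃ (mul_nonneg hC₄ (by positivity))
    have hgint : IntegrableOn g (Set.Ioi r) :=
      integrableOn_Ioi_deriv_of_nonneg' hFd hgpos (aux_tendsto C₃ C₄)
    have hgval : ∫ x in Set.Ioi r, g x =
        (C₃ + C₄ * ((Real.log r)^3 + 6*(Real.log r)^2 + 15*Real.log r + 16)) / r := by
      rw [integral_Ioi_of_hasDerivAt_of_nonneg' hFd hgpos (aux_tendsto C₃ C₄)]
      ring
    have hbnd : ∀ x ∈ Set.Ioi r, ν x / x ^ 2 ≤ g x := by
      intro x hx
      have hx1 : (1:ℝ) ≤ x := le_trans hr (le_of_lt hx)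
      have hx0 : (0:ℝ) < x := lt_of_lt_of_le one_pos hx1
      exact div_le_div_of_nonneg_right (hpt x hx1) (by positivity) |>.trans_eq rfl
    have hνmeas : AEStronglyMeasurable (fun s => ν s / s ^ 2)
        (volume.restrict (Set.Ioi r)) := by
      have h1 : AEStronglyMeasurable (fun s : ℝ => ν (max s 1) / s ^ 2)
          (volume.restrict (Set.Ioi r)) :=
        ((hm.div ((measurable_id.pow_const 2))).aestronglyMeasurable).restrict
      apply h1.congr
      filter_upwards [ae_restrict_mem measurableSet_Ioi] with x hx
      have : max x 1 = x := max_eq_left (le_trans hr (le_of_lt hx))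
      rw [this]
    have hνint : IntegrableOn (fun s => ν s / s ^ 2) (Set.Ioi r) := by
      apply Integrable.mono' hgint hνmeas
      filter_upwards [ae_restrict_mem measurableSet_Ioi] with x hx
      have hx1 : (1:ℝ) ≤ x := le_trans hr (le_of_lt hx)
      have hx0 : (0:ℝ) < x := lt_of_lt_of_le one_pos hx1
      rw [Real.norm_eq_abs, abs_of_nonneg (div_nonneg (hν_nonneg x hx0) (by positivity))]
      exact hbnd x hx
    refine ⟨hνint, ?_⟩
    have hle : ∫ s in Set.Ioi r, ν s / s ^ 2 ≤ ∫ x in Set.Ioi r, g x :=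
      setIntegral_mono_on hνint hgint measurableSet_Ioi hbnd
    rw [hgval] at hle
    calc r * (∫ s in Set.Ioi r, ν s / s ^ 2)
        ≤ r * ((C₃ + C₄ * ((Real.log r)^3 + 6*(Real.log r)^2 + 15*Real.log r + 16)) / r) :=
          mul_le_mul_of_nonneg_left hle hr0.le
      _ = C₃ + C₄ * ((Real.log r)^3 + 6*(Real.log r)^2 + 15*Real.log r + 16) := by
          field_simp
  refine ⟨fun r hr => (hfacts r hr).1, 2*C₃ + 37*C₄, 23*C₄, by linarith, by linarith, ?_⟩
  intro r hr
  have hr0 : (0:ℝ) < r := lt_of_lt_of_le one_pos hr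
  have h1 := hν_bound r hr0
  rw [abs_of_nonneg (Real.log_nonneg hr)] at h1
  have h2 := (hfacts r hr).2
  set x := Real.log r with hx
  have hx0 : 0 ≤ x := Real.log_nonneg hr
  nlinarith [mul_nonneg hC₄ (mul_nonneg hx0 (sq_nonneg (x-1))),
    mul_nonneg hC₄ (sq_nonneg (x-1)), mul_nonneg hC₄ hx0, mul_nonneg hC₄ (sq_nonneg x)]
end

section
/- Let F : ℂ → ℂ be entire, and let A₁ > 0 and A₂ > 0 satisfy |F(z)| ≤ exp(A₁ + A₂ |log|z||³) for every z ∈ ℂ with z ≠ 0. Then there exist constants α > 0 and β > 0 such that the Taylor coefficients a_n = F⁽ⁿ⁾(0)/n! of F at 0 satisfy |a_n| ≤ α exp(−β n^{3/2}) for all n ∈ ℕ. -/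
open Real

/-- Cauchy estimate for Taylor coefficients of an entire function. -/
lemma cauchy_coeff_bound (F : ℂ → ℂ) (hF : Differentiable ℂ F) (r : ℝ) (hr : 0 < r)
    (M : ℝ) (hM : ∀ θ : ℝ, ‖F (circleMap 0 r θ)‖ ≤ M) (n : ℕ) :
    ‖iteratedDeriv n F 0 / (n.factorial : ℂ)‖ ≤ M * r⁻¹ ^ n := by
  have hps : HasFPowerSeriesOnBall F (cauchyPowerSeries F 0 (r.toNNReal : ℝ)) 0 ⊤ :=
    hF.hasFPowerSeriesOnBall 0 (Real.toNNReal_pos.2 hr)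
  rw [Real.coe_toNNReal r hr.le] at hps
  set p := cauchyPowerSeries F 0 r with hp
  have key : iteratedDeriv n F 0 = (n.factorial : ℂ) * (p n fun _ => 1) := by
    have h1 := hps.factorial_smul (1 : ℂ) n
    rw [iteratedDeriv_eq_iteratedFDeriv]
    rw [← h1, nsmul_eq_mul]
  have hfac : (n.factorial : ℂ) ≠ 0 := by
    exact_mod_cast Nat.cast_ne_zero.2 n.factorial_ne_zero
  have h2 : ‖iteratedDeriv n F 0 / (n.factorial : ℂ)‖
      = ‖p n fun _ => 1‖ := by
    rw [key, mul_div_assoc, mul_comm, div_mul_cancel₀ _ hfac]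
  rw [h2]
  have h3 : ‖p n fun _ => 1‖ ≤ ‖p n‖ := by
    have := (p n).le_opNorm (fun _ => (1 : ℂ))
    simpa using this
  have h4 : ‖p n‖ ≤ ((2 * π)⁻¹ * ∫ θ : ℝ in (0)..2 * π,
      ‖F (circleMap 0 r θ)‖) * |r|⁻¹ ^ n := norm_cauchyPowerSeries_le F 0 r n
  have hcont : Continuous fun θ : ℝ => ‖F (circleMap 0 r θ)‖ :=
    (hF.continuous.comp (continuous_circleMap 0 r)).norm
  have hint : ∫ θ : ℝ in (0)..2 * π, ‖F (circleMap 0 r θ)‖ ≤ 2 * π * M := by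
    calc ∫ θ : ℝ in (0)..2 * π, ‖F (circleMap 0 r θ)‖
        ≤ ∫ _ : ℝ in (0)..2 * π, M := by
          apply intervalIntegral.integral_mono_on Real.two_pi_pos.le
            (hcont.intervalIntegrable _ _) intervalIntegrable_const
          intro θ _
          exact hM θ
      _ = 2 * π * M := by simp [mul_comm]
  have hMnn : 0 ≤ M := le_trans (norm_nonneg _) (hM 0)
  calc ‖p n fun _ => 1‖ ≤ _ := h3
    _ ≤ ((2 * π)⁻¹ * (2 * π * M)) * |r|⁻¹ ^ n :=
        h4.trans (mul_le_mul_of_nonneg_right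
          (mul_le_mul_of_nonneg_left hint (by positivity)) (by positivity))
    _ = M * r⁻¹ ^ n := by
        rw [abs_of_pos hr, inv_mul_cancel_left₀ (by positivity)]

/-- If `F` is entire with `|F(z)| ≤ exp(A₁ + A₂ |log|z||³)` for
`z ≠ 0`, then its Taylor coefficients at `0` satisfy `|a_n| ≤ α exp(−β n^{3/2})`
for some `α, β > 0`. -/
theorem stmt_15 (F : ℂ → ℂ) (hF : Differentiable ℂ F)
    (A₁ A₂ : ℝ) (hA₁ : 0 < A₁) (hA₂ : 0 < A₂)
    (hbound : ∀ z : ℂ, z ≠ 0 →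
      ‖F z‖ ≤ Real.exp (A₁ + A₂ * |Real.log ‖z‖| ^ 3)) :
    ∃ α β : ℝ, 0 < α ∧ 0 < β ∧ ∀ n : ℕ,
      ‖iteratedDeriv n F 0 / (n.factorial : ℂ)‖
        ≤ α * Real.exp (-β * (n : ℝ) ^ (3/2 : ℝ)) := by
  have hsA : 0 < Real.sqrt (3 * A₂) := Real.sqrt_pos.2 (by linarith)
  set s : ℝ := Real.sqrt (3 * A₂) with hsdef
  refine ⟨Real.exp A₁, 2 / (3 * s), Real.exp_pos _, by positivity, ?_⟩
  intro n
  set t : ℝ := Real.sqrt ((n : ℝ) / (3 * A₂)) with htdef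
  have ht0 : 0 ≤ t := Real.sqrt_nonneg _
  set r : ℝ := Real.exp t with hrdef
  have hr : 0 < r := Real.exp_pos _
  have hM : ∀ θ : ℝ, ‖F (circleMap 0 r θ)‖
      ≤ Real.exp (A₁ + A₂ * t ^ 3) := by
    intro θ
    have hz : circleMap 0 r θ ≠ 0 := circleMap_ne_center hr.ne'
    have h := hbound _ hz
    rwa [norm_circleMap_zero, abs_of_pos hr, Real.log_exp, abs_of_nonneg ht0] at h
  have hmain := cauchy_coeff_bound F hF r hr _ hM n
  refine hmain.trans (le_of_eq ?_)
  -- arithmetic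
  have ht2 : t ^ 2 = (n : ℝ) / (3 * A₂) := Real.sq_sqrt (by positivity)
  have htn : t = Real.sqrt n / s := by
    rw [htdef, Real.sqrt_div (Nat.cast_nonneg n), hsdef]
  have h32 : (n : ℝ) ^ (3/2 : ℝ) = (n : ℝ) * Real.sqrt n := by
    rw [show (3/2 : ℝ) = (1/2) * 3 by norm_num, Real.rpow_mul (Nat.cast_nonneg n),
      ← Real.sqrt_eq_rpow, show (3:ℝ) = ((3:ℕ):ℝ) by norm_num, Real.rpow_natCast,
      pow_succ, sq, Real.mul_self_sqrt (Nat.cast_nonneg n)]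
  have hrinv : r⁻¹ ^ n = Real.exp (-((n : ℝ) * t)) := by
    rw [hrdef, show -((n:ℝ) * t) = (n:ℝ) * (-t) by ring, Real.exp_nat_mul, Real.exp_neg]
  rw [hrinv, ← Real.exp_add, ← Real.exp_add]
  congr 1
  have hA3 : A₂ * t ^ 3 = (n : ℝ) * t / 3 := by
    have : t ^ 3 = t * t ^ 2 := by ring
    rw [this, ht2]
    field_simp
  have hnt : (n : ℝ) * t = (n : ℝ) ^ (3/2 : ℝ) / s := by
    rw [htn, h32]; ring
  rw [hA3, hnt]
  have hs0 : s ≠ 0 := hsA.ne'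
  field_simp
  ring
end
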